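/- Jacobian of the quadratic change of variables (eq. MLE.2): fix ξ ∈ ℂ with ξ ≠ 0. For every N×N complex matrix M such that ξ·I − M is invertible, the map F(M) = (ξ·I − M)⁻¹ − ξ⁻¹·I is differentiable at M and its divergence satisfies div F(M) = ( tr((ξ·I − M)⁻¹) )². -/

import Mathlib

open Matrix

attribute [local instance] Matrix.normedAddCommGroup Matrix.normedSpace

/-- The divergence of a map `F` on `N×N` complex matrices at `M`:
`div F (M) = ∑_{i,j} (D F_{ij})(M)[E_{ij}]`, where `E_{ij}` is the elementary matrix. -/
noncomputable def matrixDivergence {N : ℕ}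
    (F : Matrix (Fin N) (Fin N) ℂ → Matrix (Fin N) (Fin N) ℂ)
    (M : Matrix (Fin N) (Fin N) ℂ) : ℂ :=
  ∑ i : Fin N, ∑ j : Fin N,
    fderiv ℂ (fun X => F X i j) M (Matrix.single i j (1 : ℂ))

section Aux

variable {N : ℕ}

/-- The continuous linear map extracting the `(i,j)` entry of a matrix. -/
noncomputable def entryCLM (i j : Fin N) : Matrix (Fin N) (Fin N) ℂ →L[ℂ] ℂ :=
  (ContinuousLinearMap.proj j).comp (ContinuousLinearMap.proj (R := ℂ)
    (φ := fun _ : Fin N => Fin N → ℂ) i)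

@[simp] lemma entryCLM_apply (i j : Fin N) (X : Matrix (Fin N) (Fin N) ℂ) :
    entryCLM i j X = X i j := rfl

lemma hasFDerivAt_entry (ξ : ℂ) (i j : Fin N) (M : Matrix (Fin N) (Fin N) ℂ) :
    HasFDerivAt (fun X : Matrix (Fin N) (Fin N) ℂ => (ξ • (1 : Matrix (Fin N) (Fin N) ℂ) - X) i j)
      (-(entryCLM i j)) M := by
  have h1 : HasFDerivAt (fun X : Matrix (Fin N) (Fin N) ℂ => X i j) (entryCLM i j) M :=
    (entryCLM i j).hasFDerivAt
  have h2 := h1.const_sub ((ξ • (1 : Matrix (Fin N) (Fin N) ℂ)) i j)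
  exact h2

lemma differentiableAt_det {f : Matrix (Fin N) (Fin N) ℂ → Matrix (Fin N) (Fin N) ℂ}
    {M : Matrix (Fin N) (Fin N) ℂ} (hf : ∀ i j, DifferentiableAt ℂ (fun X => f X i j) M) :
    DifferentiableAt ℂ (fun X => (f X).det) M := by
  simp_rw [Matrix.det_apply']
  exact DifferentiableAt.fun_sum fun σ _ =>
    ((HasFDerivAt.finset_prod (fun i (_ : i ∈ Finset.univ) =>
      (hf (σ i) i).hasFDerivAt)).differentiableAt.const_mul _)

lemma differentiableAt_inv_entry (ξ : ℂ) {M : Matrix (Fin N) (Fin N) ℂ}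
    (hdet : (ξ • (1 : Matrix (Fin N) (Fin N) ℂ) - M).det ≠ 0) (p q : Fin N) :
    DifferentiableAt ℂ (fun X => (ξ • (1 : Matrix (Fin N) (Fin N) ℂ) - X)⁻¹ p q) M := by
  have hA : ∀ i j, DifferentiableAt ℂ
      (fun X => (ξ • (1 : Matrix (Fin N) (Fin N) ℂ) - X) i j) M :=
    fun i j => (hasFDerivAt_entry ξ i j M).differentiableAt
  have hdet' : DifferentiableAt ℂ
      (fun X => (ξ • (1 : Matrix (Fin N) (Fin N) ℂ) - X).det) M := differentiableAt_det hA
  have hadj : DifferentiableAt ℂ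
      (fun X => (ξ • (1 : Matrix (Fin N) (Fin N) ℂ) - X).adjugate p q) M := by
    simp_rw [Matrix.adjugate_apply]
    apply differentiableAt_det
    intro i j
    rcases eq_or_ne i q with h | h
    · simp [h, Matrix.updateRow_apply]
    · simpa [h, Matrix.updateRow_apply] using hA i j
  have heq : (fun X => (ξ • (1 : Matrix (Fin N) (Fin N) ℂ) - X)⁻¹ p q)
      = fun X => ((ξ • (1 : Matrix (Fin N) (Fin N) ℂ) - X).det)⁻¹ *
          (ξ • (1 : Matrix (Fin N) (Fin N) ℂ) - X).adjugate p q := by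
    funext X
    rw [Matrix.inv_def, Matrix.smul_apply, smul_eq_mul, Ring.inverse_eq_inv']
  rw [heq]
  exact (hdet'.inv hdet).mul hadj

lemma fderiv_inv_entry (ξ : ℂ) {M : Matrix (Fin N) (Fin N) ℂ}
    (hdet : (ξ • (1 : Matrix (Fin N) (Fin N) ℂ) - M).det ≠ 0)
    (H : Matrix (Fin N) (Fin N) ℂ) (p q : Fin N) :
    fderiv ℂ (fun X => (ξ • (1 : Matrix (Fin N) (Fin N) ℂ) - X)⁻¹ p q) M H
      = ((ξ • (1 : Matrix (Fin N) (Fin N) ℂ) - M)⁻¹ * H *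
          (ξ • (1 : Matrix (Fin N) (Fin N) ℂ) - M)⁻¹) p q := by
  set A : Matrix (Fin N) (Fin N) ℂ → Matrix (Fin N) (Fin N) ℂ :=
    fun X => ξ • (1 : Matrix (Fin N) (Fin N) ℂ) - X with hAdef
  set B := (A M)⁻¹ with hB
  have hUdet : IsUnit (A M).det := isUnit_iff_ne_zero.mpr hdet
  have hBA : B * A M = 1 := Matrix.nonsing_inv_mul _ hUdet
  have hAB : A M * B = 1 := Matrix.mul_nonsing_inv _ hUdet
  set φ : Fin N → Fin N → (Matrix (Fin N) (Fin N) ℂ →L[ℂ] ℂ) :=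
    fun p q => fderiv ℂ (fun X => (A X)⁻¹ p q) M with hφ
  -- key: for all p j : ∑ k, φ p k H * A M k j = (B * H) p j
  have key : ∀ p j, ∑ k, φ p k H * A M k j = (B * H) p j := by
    intro p j
    have hDiff : ∀ a b, DifferentiableAt ℂ (fun X => (A X)⁻¹ a b) M :=
      fun a b => differentiableAt_inv_entry ξ hdet a b
    have hs : HasFDerivAt (fun X => ∑ k, (A X)⁻¹ p k * (A X) k j)
        (∑ k, (((A M)⁻¹ p k) • (-(entryCLM k j)) + ((A M) k j) • φ p k)) M := by
      apply HasFDerivAt.fun_sum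
      intro k _
      exact (hDiff p k).hasFDerivAt.mul (hasFDerivAt_entry ξ k j M)
    -- eventually constant
    have hdetA : DifferentiableAt ℂ (fun X => (A X).det) M :=
      differentiableAt_det fun i j => (hasFDerivAt_entry ξ i j M).differentiableAt
    have hev : (fun X => ∑ k, (A X)⁻¹ p k * (A X) k j) =ᶠ[nhds M]
        fun _ => (1 : Matrix (Fin N) (Fin N) ℂ) p j := by
      have : ∀ᶠ X in nhds M, (A X).det ≠ 0 :=
        hdetA.continuousAt.eventually_ne hdet
      filter_upwards [this] with X hX
      have : (A X)⁻¹ * A X = 1 := Matrix.nonsing_inv_mul _ (isUnit_iff_ne_zero.mpr hX)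
      calc ∑ k, (A X)⁻¹ p k * (A X) k j = ((A X)⁻¹ * A X) p j := by
            rw [Matrix.mul_apply]
        _ = (1 : Matrix (Fin N) (Fin N) ℂ) p j := by rw [this]
    have hzero : (∑ k, (((A M)⁻¹ p k) • (-(entryCLM k j)) + ((A M) k j) • φ p k)) = 0 := by
      rw [← hs.fderiv]
      calc fderiv ℂ (fun X => ∑ k, (A X)⁻¹ p k * (A X) k j) M
          = fderiv ℂ (fun _ => (1 : Matrix (Fin N) (Fin N) ℂ) p j) M := hev.fderiv_eq
        _ = 0 := fderiv_const_apply _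
    have := congrArg (fun (L : Matrix (Fin N) (Fin N) ℂ →L[ℂ] ℂ) => L H) hzero
    simp only [ContinuousLinearMap.sum_apply, ContinuousLinearMap.add_apply,
      ContinuousLinearMap.smul_apply, ContinuousLinearMap.neg_apply, entryCLM_apply,
      ContinuousLinearMap.zero_apply, smul_eq_mul] at this
    have h2 : ∑ k, (A M) k j * φ p k H = ∑ k, (A M)⁻¹ p k * H k j := by
      have h3 := this
      rw [Finset.sum_add_distrib] at h3
      have h4 : ∑ x, (ξ • (1 : Matrix (Fin N) (Fin N) ℂ) - M)⁻¹ p x * -H x j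
          = -∑ x, (A M)⁻¹ p x * H x j := by
        simp [mul_neg]
        rfl
      rw [h4] at h3
      linear_combination h3
    rw [Matrix.mul_apply]
    calc ∑ k, φ p k H * A M k j = ∑ k, (A M) k j * φ p k H := by
          exact Finset.sum_congr rfl fun k _ => mul_comm _ _
      _ = ∑ k, B p k * H k j := h2
  -- assemble matrix identity
  set L : Matrix (Fin N) (Fin N) ℂ := Matrix.of fun p q => φ p q H with hL
  have hLA : L * A M = B * H := by
    ext p j
    rw [Matrix.mul_apply]
    exact key p j
  have hLfinal : L = B * H * B := by
    calc L = L * 1 := by rw [mul_one]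
      _ = L * (A M * B) := by rw [hAB]
      _ = (L * A M) * B := by rw [mul_assoc]
      _ = B * H * B := by rw [hLA]
  exact congrFun (congrFun (congrArg
    (fun (X : Matrix (Fin N) (Fin N) ℂ) => (X : Matrix (Fin N) (Fin N) ℂ)) hLfinal) p) q

end Aux

/-- Jacobian of the quadratic change of variables (eq. MLE.2): for `ξ ≠ 0` and
`F(M) = (ξ·I − M)⁻¹ − ξ⁻¹·I`, whenever `ξ·I − M` is invertible, `F` is differentiable at `M`
and `div F (M) = ( tr((ξ·I − M)⁻¹) )²`. -/
theorem jacobian_quadratic_change_of_variables (N : ℕ) (ξ : ℂ) (hξ : ξ ≠ 0)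
    (M : Matrix (Fin N) (Fin N) ℂ)
    (hM : IsUnit (ξ • (1 : Matrix (Fin N) (Fin N) ℂ) - M)) :
    DifferentiableAt ℂ (fun X : Matrix (Fin N) (Fin N) ℂ =>
        (ξ • (1 : Matrix (Fin N) (Fin N) ℂ) - X)⁻¹ - ξ⁻¹ • (1 : Matrix (Fin N) (Fin N) ℂ)) M ∧
      matrixDivergence (fun X =>
          (ξ • (1 : Matrix (Fin N) (Fin N) ℂ) - X)⁻¹ - ξ⁻¹ • (1 : Matrix (Fin N) (Fin N) ℂ)) M
        = (((ξ • (1 : Matrix (Fin N) (Fin N) ℂ) - M)⁻¹).trace) ^ 2 := by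
  have hdet : (ξ • (1 : Matrix (Fin N) (Fin N) ℂ) - M).det ≠ 0 := by
    have := (Matrix.isUnit_iff_isUnit_det _).mp hM
    exact this.ne_zero
  set B := (ξ • (1 : Matrix (Fin N) (Fin N) ℂ) - M)⁻¹ with hB
  constructor
  · apply differentiableAt_pi.mpr
    intro i
    apply differentiableAt_pi.mpr
    intro j
    exact (differentiableAt_inv_entry ξ hdet i j).sub_const _
  · unfold matrixDivergence
    have hent : ∀ i j : Fin N, fderiv ℂ
        (fun X => ((ξ • (1 : Matrix (Fin N) (Fin N) ℂ) - X)⁻¹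
          - ξ⁻¹ • (1 : Matrix (Fin N) (Fin N) ℂ)) i j) M
        = fderiv ℂ (fun X => (ξ • (1 : Matrix (Fin N) (Fin N) ℂ) - X)⁻¹ i j) M := by
      intro i j
      have heq : (fun X => ((ξ • (1 : Matrix (Fin N) (Fin N) ℂ) - X)⁻¹
          - ξ⁻¹ • (1 : Matrix (Fin N) (Fin N) ℂ)) i j)
          = fun X => (ξ • (1 : Matrix (Fin N) (Fin N) ℂ) - X)⁻¹ i j
              - (ξ⁻¹ • (1 : Matrix (Fin N) (Fin N) ℂ)) i j := rfl
      rw [heq]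
      exact fderiv_sub_const _
    have hBE : ∀ i j : Fin N,
        (B * (Matrix.single i j (1 : ℂ) * B)) i j = B i i * B j j := by
      intro i j
      rw [Matrix.mul_apply]
      rw [Finset.sum_eq_single i]
      · simp
      · intro k _ hk
        rw [Matrix.single_mul_apply_of_ne (c := (1:ℂ)) i j k j hk, mul_zero]
      · simp
    calc ∑ i : Fin N, ∑ j : Fin N, fderiv ℂ
          (fun X => ((ξ • (1 : Matrix (Fin N) (Fin N) ℂ) - X)⁻¹
            - ξ⁻¹ • (1 : Matrix (Fin N) (Fin N) ℂ)) i j) M (Matrix.single i j (1 : ℂ))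
        = ∑ i : Fin N, ∑ j : Fin N, B i i * B j j := by
          apply Finset.sum_congr rfl
          intro i _
          apply Finset.sum_congr rfl
          intro j _
          rw [hent i j, fderiv_inv_entry ξ hdet _ i j, ← hB, mul_assoc, hBE i j]
      _ = (∑ i : Fin N, B i i) * (∑ j : Fin N, B j j) := by
          rw [Finset.sum_mul_sum]
      _ = B.trace ^ 2 := by
          rw [Matrix.trace, sq]
          simp [Matrix.diag]
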